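/- For every π ∈ P₁,₂^{sym}(n) there exists a unique partition π̂ of [±n] into pairs and singletons such that: π̂ is noncrossing with respect to the linear order −n < … < −1 < 1 < … < n, π̂ is invariant under negation, every block of π̂ is entirely contained in {1,…,n} or entirely contained in {−n,…,−1}, (a) the set of right legs of the positive pairs of π̂ equals the set of right legs of the positive pairs of π, (b) the set of left legs of the negative pairs of π̂ equals the set of left legs of the negative pairs of π, and (c) no pair of π̂ covers a singleton, i.e. there is no pair (a,b) ∈ π̂ and singleton {c} of π̂ with a < c < b. -/

import Mathlib

/-!
STATEMENT 7: for every π ∈ P₁,₂^{sym}(n) there is a unique partition π̂ of [±n] into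
pairs and singletons which is noncrossing, invariant under negation, with every block
contained in {1,…,n} or in {−n,…,−1}, having the same right legs of positive pairs and
the same left legs of negative pairs as π, and whose pairs do not cover singletons.
-/

noncomputable section

namespace TypeB

/-- The set [±n] = {−n,…,−1,1,…,n} ⊆ ℤ. -/
def pmSet (n : ℕ) : Set ℤ := {i | i ≠ 0 ∧ |i| ≤ (n : ℤ)}

/-- Negation of a set of integers. -/
def negSet (B : Set ℤ) : Set ℤ := (fun x : ℤ => -x) '' B

/-- π is a set partition of S: blocks are nonempty subsets of S and every element of S
belongs to exactly one block. -/
def IsPartitionOn (S : Set ℤ) (π : Set (Set ℤ)) : Prop :=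
  (∀ B ∈ π, B ⊆ S ∧ B.Nonempty) ∧ (∀ x ∈ S, ∃! B, B ∈ π ∧ x ∈ B)

/-- A block which is a pair. -/
def IsPairB (B : Set ℤ) : Prop := ∃ a b : ℤ, a ≠ b ∧ B = {a, b}

/-- A block which is a singleton. -/
def IsSingleB (B : Set ℤ) : Prop := ∃ a : ℤ, B = {a}

/-- P₁,₂^{sym}(n): partitions of [±n] into pairs and singletons, invariant under
negation, in which no pair equals its own negation. -/
def P12sym (n : ℕ) (π : Set (Set ℤ)) : Prop :=
  IsPartitionOn (pmSet n) π ∧ (∀ B ∈ π, IsPairB B ∨ IsSingleB B) ∧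
  (∀ B ∈ π, negSet B ∈ π) ∧ (∀ B ∈ π, IsPairB B → negSet B ≠ B)

/-- A partition is noncrossing: there are no i < j < k < l with i,k in one block and
j,l in a different block. -/
def NonCrossing (π : Set (Set ℤ)) : Prop :=
  ¬ ∃ (i j k l : ℤ) (B C : Set ℤ), B ∈ π ∧ C ∈ π ∧ B ≠ C ∧
    i < j ∧ j < k ∧ k < l ∧ i ∈ B ∧ k ∈ B ∧ j ∈ C ∧ l ∈ C

/-- The set of right legs of the positive pairs of π: elements b such that (a,b) ∈ π for
some a < b with b > −a. -/
def posRightLegs (π : Set (Set ℤ)) : Set ℤ :=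
  {b | ∃ a : ℤ, a < b ∧ ({a, b} : Set ℤ) ∈ π ∧ -a < b}

/-- The set of left legs of the negative pairs of π: elements a such that (a,b) ∈ π for
some b > a with b ≤ −a (i.e. the pair is not positive). -/
def negLeftLegs (π : Set (Set ℤ)) : Set ℤ :=
  {a | ∃ b : ℤ, a < b ∧ ({a, b} : Set ℤ) ∈ π ∧ ¬(-a < b)}

/-- No pair (a,b) of ρ covers a singleton {c} of ρ, i.e. a < c < b never happens. -/
def NoCoveredSingleton (ρ : Set (Set ℤ)) : Prop :=
  ¬ ∃ a b c : ℤ, a < c ∧ c < b ∧ ({a, b} : Set ℤ) ∈ ρ ∧ ({c} : Set ℤ) ∈ ρ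

/-- The defining properties of the partition π̂ associated with π ∈ P₁,₂^{sym}(n). -/
def HatProps (n : ℕ) (π ρ : Set (Set ℤ)) : Prop :=
  IsPartitionOn (pmSet n) ρ ∧
  (∀ B ∈ ρ, IsPairB B ∨ IsSingleB B) ∧
  NonCrossing ρ ∧
  (∀ B ∈ ρ, negSet B ∈ ρ) ∧
  (∀ B ∈ ρ, (∀ x ∈ B, 0 < x) ∨ (∀ x ∈ B, x < 0)) ∧
  posRightLegs ρ = posRightLegs π ∧
  negLeftLegs ρ = negLeftLegs π ∧
  NoCoveredSingleton ρ

lemma negSet_negSet (B : Set ℤ) : negSet (negSet B) = B := by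
  simp [negSet, Set.image_image]

lemma negSet_pair (a b : ℤ) : negSet {a, b} = ({-a, -b} : Set ℤ) := by
  simp [negSet, Set.image_insert_eq]

lemma negSet_single (a : ℤ) : negSet {a} = ({-a} : Set ℤ) := by
  simp [negSet]

lemma blockEq {S : Set ℤ} {π : Set (Set ℤ)} (hP : IsPartitionOn S π)
    {B C : Set ℤ} (hB : B ∈ π) (hC : C ∈ π) {x : ℤ} (hxB : x ∈ B) (hxC : x ∈ C) :
    B = C := by
  have hxS : x ∈ S := (hP.1 B hB).1 hxB
  obtain ⟨D, _, hD⟩ := hP.2 x hxS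
  have h1 := hD B ⟨hB, hxB⟩
  have h2 := hD C ⟨hC, hxC⟩
  rw [h1, h2]

lemma pair_eq_pair {a b c d : ℤ} (hab : a < b) (hcd : c < d)
    (h : ({a, b} : Set ℤ) = {c, d}) : a = c ∧ b = d := by
  have ha : a ∈ ({c, d} : Set ℤ) := h ▸ (by simp : a ∈ ({a, b} : Set ℤ))
  have hb : b ∈ ({c, d} : Set ℤ) := h ▸ (by simp : b ∈ ({a, b} : Set ℤ))
  have hc : c ∈ ({a, b} : Set ℤ) := h ▸ (by simp : c ∈ ({c, d} : Set ℤ))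
  simp only [Set.mem_insert_iff, Set.mem_singleton_iff] at ha hb hc
  rcases ha with rfl | rfl
  · rcases hb with rfl | rfl
    · omega
    · exact ⟨rfl, rfl⟩
  · omega

lemma pair_right_unique {S : Set ℤ} {π : Set (Set ℤ)} (hP : IsPartitionOn S π)
    {a a' r : ℤ} (h1 : ({a, r} : Set ℤ) ∈ π) (h2 : ({a', r} : Set ℤ) ∈ π)
    (ha : a ≠ r) (_ha' : a' ≠ r) : a = a' := by
  have := blockEq hP h1 h2 (x := r) (by simp) (by simp)
  have : a ∈ ({a', r} : Set ℤ) := this ▸ (by simp : a ∈ ({a, r} : Set ℤ))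
  simp only [Set.mem_insert_iff, Set.mem_singleton_iff] at this
  tauto

lemma negLeft_eq {σ : Set (Set ℤ)} (hsym : ∀ B ∈ σ, negSet B ∈ σ)
    (hns : ∀ B ∈ σ, IsPairB B → negSet B ≠ B) :
    negLeftLegs σ = {a : ℤ | -a ∈ posRightLegs σ} := by
  ext a
  constructor
  · rintro ⟨b, hab, hmem, hnp⟩
    have hble : b ≤ -a := by omega
    have hpair : IsPairB ({a, b} : Set ℤ) := ⟨a, b, by omega, rfl⟩
    have hbne : b ≠ -a := by
      intro h
      apply hns _ hmem hpair
      rw [negSet_pair]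
      subst h
      ext x; simp; omega
    have hblt : b < -a := lt_of_le_of_ne hble hbne
    have : negSet {a, b} ∈ σ := hsym _ hmem
    rw [negSet_pair] at this
    exact ⟨-b, by omega, by rwa [Set.pair_comm], by omega⟩
  · rintro ⟨c, hc, hmem, hcp⟩
    have : negSet {c, -a} ∈ σ := hsym _ hmem
    rw [negSet_pair] at this
    simp only [neg_neg] at this
    exact ⟨-c, by omega, by rwa [Set.pair_comm] at this, by omega⟩
open Classical in
/-- number of elements of R in [1,x]. -/
noncomputable def cnt (R : Set ℤ) (x : ℤ) : ℤ :=
  ((Finset.Icc 1 x).filter (fun y => y ∈ R)).card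

/-- height function of the lattice path associated with R. -/
noncomputable def ht (R : Set ℤ) (x : ℤ) : ℤ := x - 2 * cnt R x

/-- a is on the greedy stack at time t. -/
def stacked (R : Set ℤ) (a t : ℤ) : Prop :=
  a ∉ R ∧ 1 ≤ a ∧ a ≤ t ∧ ∀ s, a ≤ s → s ≤ t → ht R a ≤ ht R s

open Classical in
/-- the greedy partner of r: the top of the stack at time r-1. -/
noncomputable def ptn (R : Set ℤ) (r : ℤ) : ℤ :=
  (((Finset.Icc 1 (r-1)).filter (fun a => stacked R a (r-1))).max).getD 0

lemma cnt_nonpos {R : Set ℤ} {x : ℤ} (hx : x ≤ 0) : cnt R x = 0 := by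
  classical
  have : Finset.Icc (1:ℤ) x = ∅ := Finset.Icc_eq_empty (by omega)
  simp [cnt, this]

open Classical in
lemma cnt_succ (R : Set ℤ) {x : ℤ} (hx : 1 ≤ x) :
    cnt R x = cnt R (x-1) + (if x ∈ R then 1 else 0) := by
  have h : Finset.Icc (1:ℤ) x = insert x (Finset.Icc 1 (x-1)) := by
    ext y; simp [Finset.mem_Icc]; omega
  have hx' : x ∉ Finset.Icc (1:ℤ) (x-1) := by simp [Finset.mem_Icc]
  rw [cnt, h, Finset.filter_insert]
  by_cases hm : x ∈ R <;> simp [hm, cnt, Finset.card_insert_of_notMem, hx',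
    fun h => hx' (Finset.mem_filter.mp h).1]

lemma cnt_nonneg (R : Set ℤ) (x : ℤ) : 0 ≤ cnt R x := by
  classical
  exact Int.ofNat_nonneg _

lemma ht_zero (R : Set ℤ) : ht R 0 = 0 := by simp [ht, cnt_nonpos]

lemma ht_mem {R : Set ℤ} {x : ℤ} (hx : 1 ≤ x) (h : x ∈ R) :
    ht R x = ht R (x-1) - 1 := by
  simp [ht, cnt_succ R hx, h]; ring

lemma ht_not_mem {R : Set ℤ} {x : ℤ} (hx : 1 ≤ x) (h : x ∉ R) :
    ht R x = ht R (x-1) + 1 := by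
  simp [ht, cnt_succ R hx, h]; ring

lemma stacked_restrict {R : Set ℤ} {a t t' : ℤ} (h : stacked R a t') (h1 : a ≤ t)
    (h2 : t ≤ t') : stacked R a t :=
  ⟨h.1, h.2.1, h1, fun s hs hs' => h.2.2.2 s hs (by omega)⟩

lemma stacked_strict {R : Set ℤ} {a a' t : ℤ} (h : stacked R a t) (h' : stacked R a' t)
    (hlt : a < a') : ht R a < ht R a' := by
  have ha't : a' ≤ t := h'.2.2.1
  have h1 : ht R a ≤ ht R (a'-1) := h.2.2.2 (a'-1) (by omega) (by omega)
  have h2 : ht R a' = ht R (a'-1) + 1 := ht_not_mem h'.2.1 h'.1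
  omega

lemma stacked_exists_nat {R : Set ℤ} : ∀ m : ℕ, ∀ j : ℤ, 1 ≤ j → j ≤ ht R m →
    ∃ a, stacked R a m ∧ ht R a = j := by
  intro m
  induction m with
  | zero => intro j h1 h2; rw [show ((0:ℕ):ℤ) = 0 by norm_num, ht_zero] at h2; omega
  | succ x ih =>
    intro j hj1 hj2
    have hc : ((x+1:ℕ):ℤ) = (x:ℤ)+1 := by push_cast; ring
    rw [hc] at hj2 ⊢
    by_cases hm : ((x:ℤ)+1) ∈ R
    · have hh : ht R ((x:ℤ)+1) = ht R x - 1 := by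
        have := ht_mem (x := (x:ℤ)+1) (by omega) hm; simpa using this
      obtain ⟨a, ha, hha⟩ := ih j hj1 (by omega)
      refine ⟨a, ⟨ha.1, ha.2.1, by have := ha.2.2.1; omega, ?_⟩, hha⟩
      intro s hs hs'
      rcases eq_or_lt_of_le hs' with h | h
      · rw [h]; omega
      · exact ha.2.2.2 s hs (by omega)
    · have hh : ht R ((x:ℤ)+1) = ht R x + 1 := by
        have := ht_not_mem (x := (x:ℤ)+1) (by omega) hm; simpa using this
      by_cases hje : j = ht R ((x:ℤ)+1)
      · exact ⟨(x:ℤ)+1, ⟨hm, by omega, le_refl _, fun s hs hs' => by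
          have : s = (x:ℤ)+1 := by omega
          rw [this]⟩, hje.symm⟩
      · obtain ⟨a, ha, hha⟩ := ih j hj1 (by omega)
        refine ⟨a, ⟨ha.1, ha.2.1, by have := ha.2.2.1; omega, ?_⟩, hha⟩
        intro s hs hs'
        rcases eq_or_lt_of_le hs' with h | h
        · rw [h]; omega
        · exact ha.2.2.2 s hs (by omega)

lemma stacked_exists {R : Set ℤ} {t : ℤ} (ht0 : 0 ≤ t) {j : ℤ} (h1 : 1 ≤ j)
    (h2 : j ≤ ht R t) : ∃ a, stacked R a t ∧ ht R a = j := by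
  have : ((t.toNat : ℤ)) = t := Int.toNat_of_nonneg ht0
  rw [← this] at h2 ⊢
  exact stacked_exists_nat t.toNat j h1 h2

open Classical in
lemma ptn_spec {R : Set ℤ} {r : ℤ} (hne : ∃ a, stacked R a (r-1)) :
    stacked R (ptn R r) (r-1) ∧ ∀ a, stacked R a (r-1) → a ≤ ptn R r := by
  classical
  set F := (Finset.Icc 1 (r-1)).filter (fun a => stacked R a (r-1)) with hF
  obtain ⟨a0, ha0⟩ := hne
  have ha0F : a0 ∈ F := by
    simp only [hF, Finset.mem_filter, Finset.mem_Icc]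
    exact ⟨⟨ha0.2.1, ha0.2.2.1⟩, ha0⟩
  have hFne : F.Nonempty := ⟨a0, ha0F⟩
  obtain ⟨b, hb⟩ := Finset.max_of_nonempty hFne
  have hptn : ptn R r = b := by rw [ptn, ← hF, hb]; rfl
  have hbF : b ∈ F := Finset.mem_of_max hb
  constructor
  · rw [hptn]; exact (Finset.mem_filter.mp hbF).2
  · intro a ha
    have haF : a ∈ F := by
      simp only [hF, Finset.mem_filter, Finset.mem_Icc]
      exact ⟨⟨ha.2.1, ha.2.2.1⟩, ha⟩
    rw [hptn]
    exact Finset.le_max_of_eq haF hb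
section Greedy

variable {R : Set ℤ} (hR2 : ∀ r ∈ R, 2 ≤ r) (hbal : ∀ r ∈ R, 2 * cnt R r ≤ r)

include hR2 hbal

lemma ptn_main {r : ℤ} (hr : r ∈ R) :
    stacked R (ptn R r) (r-1) ∧ (∀ a, stacked R a (r-1) → a ≤ ptn R r) ∧
    ht R (ptn R r) = ht R (r-1) := by
  have hr2 : 2 ≤ r := hR2 r hr
  have hhr : ht R r = ht R (r-1) - 1 := ht_mem (by omega) hr
  have hpos : 1 ≤ ht R (r-1) := by
    have := hbal r hr
    simp only [ht] at hhr ⊢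
    omega
  obtain ⟨a0, ha0, hha0⟩ := stacked_exists (t := r-1) (by omega) (le_refl 1) hpos
  have hspec := ptn_spec ⟨a0, ha0⟩
  refine ⟨hspec.1, hspec.2, ?_⟩
  -- the top of the stack has maximal height h(r-1)
  obtain ⟨a1, ha1, hha1⟩ := stacked_exists (t := r-1) (by omega) hpos (le_refl _)
  have h1 : a1 ≤ ptn R r := hspec.2 a1 ha1
  rcases eq_or_lt_of_le h1 with h | h
  · rw [← h]; exact hha1
  · have := stacked_strict ha1 hspec.1 h
    have h2 : ht R (ptn R r) ≤ ht R (r-1) :=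
      hspec.1.2.2.2 (r-1) hspec.1.2.2.1 (le_refl _)
    omega

lemma ptn_stacked {r : ℤ} (hr : r ∈ R) : stacked R (ptn R r) (r-1) :=
  (ptn_main hR2 hbal hr).1

lemma ptn_pos {r : ℤ} (hr : r ∈ R) : 1 ≤ ptn R r := (ptn_stacked hR2 hbal hr).2.1

lemma ptn_lt {r : ℤ} (hr : r ∈ R) : ptn R r < r := by
  have := (ptn_stacked hR2 hbal hr).2.2.1; omega

lemma ptn_not_mem {r : ℤ} (hr : r ∈ R) : ptn R r ∉ R := (ptn_stacked hR2 hbal hr).1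

lemma ptn_inj {r r' : ℤ} (hr : r ∈ R) (hr' : r' ∈ R) (h : ptn R r = ptn R r') :
    r = r' := by
  by_contra hne
  -- wlog r < r'
  wlog hlt : r < r' generalizing r r'
  · exact this hr' hr h.symm (Ne.symm hne) (by omega)
  set a := ptn R r with ha
  have h1 := ptn_main hR2 hbal hr
  have h2 := ptn_main hR2 hbal hr'
  rw [← h] at h2
  -- a is stacked at r'-1 so ht a ≤ ht r; but ht a = ht (r-1) = ht r + 1
  have ha1 : a ≤ r - 1 := h1.1.2.2.1
  have hs : ht R a ≤ ht R r := h2.1.2.2.2 r (by omega) (by omega)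
  have hht : ht R a = ht R (r-1) := h1.2.2
  have : ht R r = ht R (r-1) - 1 := ht_mem (by have := hR2 r hr; omega) hr
  omega

lemma ptn_noncross {r r' : ℤ} (hr : r ∈ R) (hr' : r' ∈ R) (hlt : r < r')
    (h1 : ptn R r < ptn R r') (h2 : ptn R r' < r) : False := by
  have hst' := ptn_stacked hR2 hbal hr'
  have hst : stacked R (ptn R r') (r-1) :=
    stacked_restrict hst' (by omega) (by omega)
  have := (ptn_main hR2 hbal hr).2.1 _ hst
  omega

lemma ptn_nocover {r c : ℤ} (hr : r ∈ R) (hc : c ∉ R) (hnp : ∀ r' ∈ R, ptn R r' ≠ c)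
    (h1 : ptn R r < c) (h2 : c < r) : False := by
  classical
  have hcpos : 1 ≤ c := by have := ptn_pos hR2 hbal hr; omega
  -- show c is stacked at r-1, contradicting maximality
  have hstacked : stacked R c (r-1) := by
    refine ⟨hc, hcpos, by omega, ?_⟩
    by_contra hbad
    push_neg at hbad
    obtain ⟨s, hs1, hs2, hs3⟩ := hbad
    -- take the least bad s
    set F := (Finset.Icc (c+1) (r-1)).filter (fun s => ht R s < ht R c) with hF
    have hsF : s ∈ F := by
      have hsc : c < s := by
        rcases eq_or_lt_of_le hs1 with h | h
        · exfalso; rw [← h] at hs3; omega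
        · exact h
      simp only [hF, Finset.mem_filter, Finset.mem_Icc]
      exact ⟨⟨by omega, hs2⟩, hs3⟩
    obtain ⟨s0, hs0⟩ := Finset.min_of_nonempty ⟨s, hsF⟩
    have hs0F : s0 ∈ F := Finset.mem_of_min hs0
    simp only [hF, Finset.mem_filter, Finset.mem_Icc] at hs0F
    obtain ⟨⟨hs0a, hs0b⟩, hs0c⟩ := hs0F
    have hmin : ∀ y, c ≤ y → y ≤ s0 - 1 → ht R c ≤ ht R y := by
      intro y hy1 hy2
      rcases eq_or_lt_of_le hy1 with h | h
      · rw [← h]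
      · by_contra hy3
        have : y ∈ F := by
          simp only [hF, Finset.mem_filter, Finset.mem_Icc]
          exact ⟨⟨by omega, by omega⟩, by omega⟩
        have := Finset.min_le_of_eq this hs0
        omega
    -- s0 ∈ R
    have hs0R : s0 ∈ R := by
      by_contra hs0R
      have := ht_not_mem (x := s0) (by omega) hs0R
      have := hmin (s0 - 1) (by omega) (le_refl _)
      omega
    have hhs0 : ht R s0 = ht R (s0-1) - 1 := ht_mem (by omega) hs0R
    have hcs : ht R c = ht R (s0 - 1) := by
      have := hmin (s0-1) (by omega) (le_refl _)
      omega
    -- c is stacked at s0 - 1 with maximal height, so ptn s0 = c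
    have hcst : stacked R c (s0-1) := ⟨hc, hcpos, by omega, fun y hy1 hy2 => hmin y hy1 hy2⟩
    have hm0 := ptn_main hR2 hbal hs0R
    have hle : c ≤ ptn R s0 := hm0.2.1 c hcst
    rcases eq_or_lt_of_le hle with h | h
    · exact hnp s0 hs0R h.symm
    · have := stacked_strict hcst hm0.1 h
      omega
  have := (ptn_main hR2 hbal hr).2.1 c hstacked
  omega

end Greedy
/-- The candidate noncrossing partition built from the set R of right legs. -/
def hatP (n : ℕ) (R : Set ℤ) : Set (Set ℤ) :=
  {B | (∃ r ∈ R, B = {ptn R r, r}) ∨ (∃ r ∈ R, B = {-r, -(ptn R r)}) ∨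
       (∃ c : ℤ, (B = {c} ∨ B = {-c}) ∧ 1 ≤ c ∧ c ≤ n ∧ c ∉ R ∧ ∀ r ∈ R, ptn R r ≠ c)}

section Hat

variable {n : ℕ} {R : Set ℤ} (hR2 : ∀ r ∈ R, 2 ≤ r) (hbal : ∀ r ∈ R, 2 * cnt R r ≤ r)
  (hRn : ∀ r ∈ R, r ≤ (n : ℤ))

include hR2 hbal hRn

lemma hat_mem_bounds {B : Set ℤ} (hB : B ∈ hatP n R) {x : ℤ} (hx : x ∈ B) :
    (1 ≤ x ∧ x ≤ n) ∨ (-(n:ℤ) ≤ x ∧ x ≤ -1) := by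
  rcases hB with ⟨r, hr, rfl⟩ | ⟨r, hr, rfl⟩ | ⟨c, hc, h1, h2, _, _⟩
  · have := ptn_pos hR2 hbal hr; have := ptn_lt hR2 hbal hr; have := hRn r hr
    simp only [Set.mem_insert_iff, Set.mem_singleton_iff] at hx
    rcases hx with rfl | rfl <;> [left; left] <;> omega
  · have := ptn_pos hR2 hbal hr; have := ptn_lt hR2 hbal hr; have := hRn r hr
    simp only [Set.mem_insert_iff, Set.mem_singleton_iff] at hx
    rcases hx with rfl | rfl <;> [right; right] <;> omega
  · rcases hc with rfl | rfl <;>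
      simp only [Set.mem_singleton_iff] at hx <;> subst hx <;> [left; right] <;> omega

omit hRn in
lemma hat_clash_pospair {r r' x : ℤ} (hr : r ∈ R) (hr' : r' ∈ R)
    (hx : x ∈ ({ptn R r, r} : Set ℤ)) (hx' : x ∈ ({ptn R r', r'} : Set ℤ)) : r = r' := by
  simp only [Set.mem_insert_iff, Set.mem_singleton_iff] at hx hx'
  rcases hx with rfl | rfl
  · rcases hx' with h | h
    · exact ptn_inj hR2 hbal hr hr' h
    · exact absurd (h ▸ hr') (ptn_not_mem hR2 hbal hr)
  · rcases hx' with h | h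
    · exact absurd (h ▸ hr) (ptn_not_mem hR2 hbal hr')
    · exact h

lemma hat_block_eq {B C : Set ℤ} (hB : B ∈ hatP n R) (hC : C ∈ hatP n R)
    {x : ℤ} (hxB : x ∈ B) (hxC : x ∈ C) : B = C := by
  rcases hB with ⟨r, hr, rfl⟩ | ⟨r, hr, rfl⟩ | ⟨c, hc, h1, h2, h3, h4⟩
  · rcases hC with ⟨r', hr', rfl⟩ | ⟨r', hr', rfl⟩ | ⟨c', hc', h1', h2', h3', h4'⟩
    · have heq := hat_clash_pospair hR2 hbal hr hr' hxB hxC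
      rw [heq]
    · -- positive pair vs negative pair: impossible
      exfalso
      have hb := hat_mem_bounds hR2 hbal hRn (Or.inl ⟨r, hr, rfl⟩) hxB
      have hb' := hat_mem_bounds hR2 hbal hRn (Or.inr (Or.inl ⟨r', hr', rfl⟩)) hxC
      have := ptn_pos hR2 hbal hr
      simp only [Set.mem_insert_iff, Set.mem_singleton_iff] at hxB hxC
      have := ptn_pos hR2 hbal hr'; have := hR2 r hr; have := hR2 r' hr'
      have := ptn_lt hR2 hbal hr; have := ptn_lt hR2 hbal hr'
      rcases hxB with rfl | rfl <;> rcases hxC with h | h <;> omega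
    · -- pair vs singleton: impossible
      exfalso
      have := ptn_pos hR2 hbal hr; have := hR2 r hr; have := ptn_lt hR2 hbal hr
      simp only [Set.mem_insert_iff, Set.mem_singleton_iff] at hxB
      rcases hc' with rfl | rfl <;> simp only [Set.mem_singleton_iff] at hxC <;>
        rcases hxB with rfl | rfl
      · exact h4' r hr hxC
      · exact h3' (hxC ▸ hr)
      · omega
      · omega
  · rcases hC with ⟨r', hr', rfl⟩ | ⟨r', hr', rfl⟩ | ⟨c', hc', h1', h2', h3', h4'⟩
    · exfalso
      have := ptn_pos hR2 hbal hr; have := hR2 r hr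
      have := ptn_pos hR2 hbal hr'; have := hR2 r' hr'
      have := ptn_lt hR2 hbal hr; have := ptn_lt hR2 hbal hr'
      simp only [Set.mem_insert_iff, Set.mem_singleton_iff] at hxB hxC
      rcases hxB with rfl | rfl <;> rcases hxC with h | h <;> omega
    · have : -x ∈ ({ptn R r, r} : Set ℤ) ∧ -x ∈ ({ptn R r', r'} : Set ℤ) := by
        simp only [Set.mem_insert_iff, Set.mem_singleton_iff] at hxB hxC ⊢
        constructor
        · rcases hxB with rfl | rfl <;> simp
        · rcases hxC with rfl | rfl <;> simp
      have heq := hat_clash_pospair hR2 hbal hr hr' this.1 this.2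
      rw [heq]
    · exfalso
      have := ptn_pos hR2 hbal hr; have := hR2 r hr; have := ptn_lt hR2 hbal hr
      simp only [Set.mem_insert_iff, Set.mem_singleton_iff] at hxB
      rcases hc' with rfl | rfl <;> simp only [Set.mem_singleton_iff] at hxC <;>
        rcases hxB with rfl | rfl
      · omega
      · omega
      · have : r = c' := by omega
        exact absurd (this ▸ hr) h3'
      · have : ptn R r = c' := by omega
        exact h4' r hr this
  · rcases hC with ⟨r', hr', rfl⟩ | ⟨r', hr', rfl⟩ | ⟨c', hc', h1', h2', h3', h4'⟩
    · exfalso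
      have := ptn_pos hR2 hbal hr'; have := hR2 r' hr'; have := ptn_lt hR2 hbal hr'
      simp only [Set.mem_insert_iff, Set.mem_singleton_iff] at hxC
      rcases hc with rfl | rfl <;> simp only [Set.mem_singleton_iff] at hxB <;>
        rcases hxC with rfl | rfl
      · exact h4 r' hr' hxB
      · exact h3 (hxB ▸ hr')
      · omega
      · omega
    · exfalso
      have := ptn_pos hR2 hbal hr'; have := hR2 r' hr'; have := ptn_lt hR2 hbal hr'
      simp only [Set.mem_insert_iff, Set.mem_singleton_iff] at hxC
      rcases hc with rfl | rfl <;> simp only [Set.mem_singleton_iff] at hxB <;>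
        rcases hxC with rfl | rfl
      · omega
      · omega
      · have : r' = c := by omega
        exact absurd (this ▸ hr') h3
      · have : ptn R r' = c := by omega
        exact h4 r' hr' this
    · rcases hc with rfl | rfl <;> rcases hc' with rfl | rfl <;>
        simp only [Set.mem_singleton_iff] at hxB hxC <;> subst hxB <;>
        first
        | (rw [hxC])
        | (exfalso; omega)
        | (rw [show c = c' by omega])

lemma hat_isPartition : IsPartitionOn (pmSet n) (hatP n R) := by
  constructor
  · intro B hB
    constructor
    · intro x hx
      have := hat_mem_bounds hR2 hbal hRn hB hx
      constructor
      · omega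
      · rw [abs_le]; omega
    · rcases hB with ⟨r, _, rfl⟩ | ⟨r, _, rfl⟩ | ⟨c, hc, _⟩ <;>
        [exact ⟨r, by simp⟩; exact ⟨-r, by simp⟩;
          (rcases hc with rfl | rfl; exacts [⟨c, by simp⟩, ⟨-c, by simp⟩])]
  · intro x hx
    obtain ⟨hx0, hxn⟩ := hx
    rw [abs_le] at hxn
    -- find the block of x
    have key : ∀ y : ℤ, 1 ≤ y → y ≤ n → ∃ B, B ∈ hatP n R ∧ y ∈ B := by
      intro y hy1 hy2
      by_cases hyR : y ∈ R
      · exact ⟨{ptn R y, y}, Or.inl ⟨y, hyR, rfl⟩, by simp⟩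
      · by_cases hyp : ∃ r ∈ R, ptn R r = y
        · obtain ⟨r, hr, hry⟩ := hyp
          exact ⟨{ptn R r, r}, Or.inl ⟨r, hr, rfl⟩, by simp [hry]⟩
        · push_neg at hyp
          exact ⟨{y}, Or.inr (Or.inr ⟨y, Or.inl rfl, hy1, hy2, hyR, hyp⟩), by simp⟩
    have hex : ∃ B, B ∈ hatP n R ∧ x ∈ B := by
      rcases lt_or_gt_of_ne hx0 with h | h
      · obtain ⟨B, hB, hxB⟩ := key (-x) (by omega) (by omega)
        refine ⟨negSet B, ?_, ⟨-x, hxB, by ring⟩⟩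
        rcases hB with ⟨r, hr, rfl⟩ | ⟨r, hr, rfl⟩ | ⟨c, hc, h1, h2, h3, h4⟩
        · rw [negSet_pair]
          exact Or.inr (Or.inl ⟨r, hr, by rw [Set.pair_comm]⟩)
        · rw [negSet_pair]
          simp only [neg_neg]
          exact Or.inl ⟨r, hr, by rw [Set.pair_comm]⟩
        · rcases hc with rfl | rfl <;> rw [negSet_single]
          · exact Or.inr (Or.inr ⟨c, Or.inr rfl, h1, h2, h3, h4⟩)
          · simp only [neg_neg]
            exact Or.inr (Or.inr ⟨c, Or.inl rfl, h1, h2, h3, h4⟩)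
      · exact key x (by omega) (by omega)
    obtain ⟨B, hB, hxB⟩ := hex
    exact ⟨B, ⟨hB, hxB⟩, fun C hC => hat_block_eq hR2 hbal hRn hC.1 hB hC.2 hxB⟩

lemma hat_pair_single : ∀ B ∈ hatP n R, IsPairB B ∨ IsSingleB B := by
  intro B hB
  rcases hB with ⟨r, hr, rfl⟩ | ⟨r, hr, rfl⟩ | ⟨c, hc, _⟩
  · exact Or.inl ⟨ptn R r, r, by have := ptn_lt hR2 hbal hr; omega, rfl⟩
  · exact Or.inl ⟨-r, -(ptn R r), by have := ptn_lt hR2 hbal hr; omega, rfl⟩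
  · rcases hc with rfl | rfl <;> [exact Or.inr ⟨c, rfl⟩; exact Or.inr ⟨-c, rfl⟩]

lemma hat_negSet : ∀ B ∈ hatP n R, negSet B ∈ hatP n R := by
  intro B hB
  rcases hB with ⟨r, hr, rfl⟩ | ⟨r, hr, rfl⟩ | ⟨c, hc, h1, h2, h3, h4⟩
  · rw [negSet_pair]
    exact Or.inr (Or.inl ⟨r, hr, by rw [Set.pair_comm]⟩)
  · rw [negSet_pair]
    simp only [neg_neg]
    exact Or.inl ⟨r, hr, by rw [Set.pair_comm]⟩
  · rcases hc with rfl | rfl <;> rw [negSet_single]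
    · exact Or.inr (Or.inr ⟨c, Or.inr rfl, h1, h2, h3, h4⟩)
    · simp only [neg_neg]
      exact Or.inr (Or.inr ⟨c, Or.inl rfl, h1, h2, h3, h4⟩)

lemma hat_sign : ∀ B ∈ hatP n R, (∀ x ∈ B, 0 < x) ∨ (∀ x ∈ B, x < 0) := by
  intro B hB
  rcases hB with ⟨r, hr, rfl⟩ | ⟨r, hr, rfl⟩ | ⟨c, hc, h1, _⟩
  · left
    intro x hx
    have := ptn_pos hR2 hbal hr; have := ptn_lt hR2 hbal hr
    simp only [Set.mem_insert_iff, Set.mem_singleton_iff] at hx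
    rcases hx with rfl | rfl <;> omega
  · right
    intro x hx
    have := ptn_pos hR2 hbal hr; have := ptn_lt hR2 hbal hr
    simp only [Set.mem_insert_iff, Set.mem_singleton_iff] at hx
    rcases hx with rfl | rfl <;> omega
  · rcases hc with rfl | rfl <;> [left; right] <;> intro x hx <;>
      simp only [Set.mem_singleton_iff] at hx <;> omega

lemma hat_noncrossing : NonCrossing (hatP n R) := by
  rintro ⟨i, j, k, l, B, C, hB, hC, hBC, hij, hjk, hkl, hiB, hkB, hjC, hlC⟩
  -- B and C must be pairs
  have pairB : ∀ (r : ℤ), r ∈ R → ∀ a b : ℤ, a < b →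
      (a ∈ ({ptn R r, r} : Set ℤ)) → (b ∈ ({ptn R r, r} : Set ℤ)) →
      a = ptn R r ∧ b = r := by
    intro r hr a b hab ha hb
    have := ptn_lt hR2 hbal hr
    simp only [Set.mem_insert_iff, Set.mem_singleton_iff] at ha hb
    rcases ha with rfl | rfl <;> rcases hb with rfl | rfl <;> omega
  have pairB' : ∀ (r : ℤ), r ∈ R → ∀ a b : ℤ, a < b →
      (a ∈ ({-r, -(ptn R r)} : Set ℤ)) → (b ∈ ({-r, -(ptn R r)} : Set ℤ)) →
      a = -r ∧ b = -(ptn R r) := by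
    intro r hr a b hab ha hb
    have := ptn_lt hR2 hbal hr
    simp only [Set.mem_insert_iff, Set.mem_singleton_iff] at ha hb
    rcases ha with rfl | rfl <;> rcases hb with rfl | rfl <;> omega
  rcases hB with ⟨r, hr, rfl⟩ | ⟨r, hr, rfl⟩ | ⟨c, hc, _⟩
  · -- B positive pair: i = ptn r, k = r
    obtain ⟨rfl, rfl⟩ := pairB r hr i k (by omega) hiB hkB
    have hipos := ptn_pos hR2 hbal hr
    rcases hC with ⟨s, hs, rfl⟩ | ⟨s, hs, rfl⟩ | ⟨c, hc, h1c, _⟩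
    · obtain ⟨rfl, rfl⟩ := pairB s hs j l (by omega) hjC hlC
      exact ptn_noncross hR2 hbal hr hs (by omega) (by omega) (by omega)
    · -- C negative pair but j > i ≥ 1
      have := ptn_pos hR2 hbal hs; have := ptn_lt hR2 hbal hs
      simp only [Set.mem_insert_iff, Set.mem_singleton_iff] at hjC
      rcases hjC with rfl | rfl <;> omega
    · rcases hc with rfl | rfl <;>
        simp only [Set.mem_singleton_iff] at hjC hlC <;> omega
  · -- B negative pair: i = -r, k = -(ptn r)
    obtain ⟨rfl, rfl⟩ := pairB' r hr i k (by omega) hiB hkB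
    have := ptn_pos hR2 hbal hr
    rcases hC with ⟨s, hs, rfl⟩ | ⟨s, hs, rfl⟩ | ⟨c, hc, h1c, _⟩
    · -- C positive pair but j < k ≤ -1
      have := ptn_pos hR2 hbal hs; have := ptn_lt hR2 hbal hs
      simp only [Set.mem_insert_iff, Set.mem_singleton_iff] at hjC
      rcases hjC with rfl | rfl <;> omega
    · obtain ⟨rfl, rfl⟩ := pairB' s hs j l (by omega) hjC hlC
      exact ptn_noncross hR2 hbal hs hr (by omega) (by omega) (by omega)
    · rcases hc with rfl | rfl <;>
        simp only [Set.mem_singleton_iff] at hjC hlC <;> omega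
  · rcases hc with rfl | rfl <;>
      simp only [Set.mem_singleton_iff] at hiB hkB <;> omega

lemma hat_nocover : NoCoveredSingleton (hatP n R) := by
  rintro ⟨a, b, c, hac, hcb, hab, hc⟩
  rcases hab with ⟨r, hr, habe⟩ | ⟨r, hr, habe⟩ | ⟨c', hc', _⟩
  · have hpl := ptn_lt hR2 hbal hr
    obtain ⟨rfl, rfl⟩ := pair_eq_pair (by omega) hpl habe
    have hppos := ptn_pos hR2 hbal hr
    rcases hc with ⟨s, hs, hce⟩ | ⟨s, hs, hce⟩ | ⟨c', hcc, h1, h2, h3, h4⟩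
    · -- {c} can't be a pair
      have := ptn_lt hR2 hbal hs
      have h1 : ptn R s ∈ ({c} : Set ℤ) := by rw [hce]; simp
      have h2 : s ∈ ({c} : Set ℤ) := by rw [hce]; simp
      simp only [Set.mem_singleton_iff] at h1 h2
      omega
    · have := ptn_lt hR2 hbal hs
      have h1 : -s ∈ ({c} : Set ℤ) := by rw [hce]; simp
      have h2 : -(ptn R s) ∈ ({c} : Set ℤ) := by rw [hce]; simp
      simp only [Set.mem_singleton_iff] at h1 h2
      omega
    · rcases hcc with he | he
      · have : c = c' := by
          have : c ∈ ({c'} : Set ℤ) := by rw [← he]; simp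
          simpa using this
        subst this
        exact ptn_nocover hR2 hbal hr h3 (fun r' hr' => h4 r' hr') hac hcb
      · have : c = -c' := by
          have : c ∈ ({-c'} : Set ℤ) := by rw [← he]; simp
          simpa using this
        omega
  · have hpl := ptn_lt hR2 hbal hr
    have hppos := ptn_pos hR2 hbal hr
    obtain ⟨rfl, rfl⟩ := pair_eq_pair (by omega) (by omega : -r < -(ptn R r)) habe
    rcases hc with ⟨s, hs, hce⟩ | ⟨s, hs, hce⟩ | ⟨c', hcc, h1, h2, h3, h4⟩
    · have := ptn_lt hR2 hbal hs
      have h1 : ptn R s ∈ ({c} : Set ℤ) := by rw [hce]; simp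
      have h2 : s ∈ ({c} : Set ℤ) := by rw [hce]; simp
      simp only [Set.mem_singleton_iff] at h1 h2
      omega
    · have := ptn_lt hR2 hbal hs
      have h1 : -s ∈ ({c} : Set ℤ) := by rw [hce]; simp
      have h2 : -(ptn R s) ∈ ({c} : Set ℤ) := by rw [hce]; simp
      simp only [Set.mem_singleton_iff] at h1 h2
      omega
    · rcases hcc with he | he
      · have : c = c' := by
          have : c ∈ ({c'} : Set ℤ) := by rw [← he]; simp
          simpa using this
        omega
      · have : c = -c' := by
          have : c ∈ ({-c'} : Set ℤ) := by rw [← he]; simp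
          simpa using this
        subst this
        exact ptn_nocover hR2 hbal hr h3 (fun r' hr' => h4 r' hr') (by omega) (by omega)
  · rcases hc' with he | he
    · have h1 : a ∈ ({c'} : Set ℤ) := by rw [← he]; simp
      have h2 : b ∈ ({c'} : Set ℤ) := by rw [← he]; simp
      simp only [Set.mem_singleton_iff] at h1 h2
      omega
    · have h1 : a ∈ ({-c'} : Set ℤ) := by rw [← he]; simp
      have h2 : b ∈ ({-c'} : Set ℤ) := by rw [← he]; simp
      simp only [Set.mem_singleton_iff] at h1 h2
      omega

lemma hat_posRight : posRightLegs (hatP n R) = R := by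
  ext b
  constructor
  · rintro ⟨a, hab, hmem, hpos⟩
    rcases hmem with ⟨r, hr, he⟩ | ⟨r, hr, he⟩ | ⟨c, hcc, _⟩
    · obtain ⟨rfl, rfl⟩ := pair_eq_pair hab (ptn_lt hR2 hbal hr) he
      exact hr
    · have := ptn_pos hR2 hbal hr; have := ptn_lt hR2 hbal hr
      obtain ⟨rfl, rfl⟩ := pair_eq_pair hab (by omega : -r < -(ptn R r)) he
      omega
    · exfalso
      rcases hcc with he | he
      · have h1 : a ∈ ({c} : Set ℤ) := by rw [← he]; simp
        have h2 : b ∈ ({c} : Set ℤ) := by rw [← he]; simp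
        simp only [Set.mem_singleton_iff] at h1 h2
        omega
      · have h1 : a ∈ ({-c} : Set ℤ) := by rw [← he]; simp
        have h2 : b ∈ ({-c} : Set ℤ) := by rw [← he]; simp
        simp only [Set.mem_singleton_iff] at h1 h2
        omega
  · intro hb
    refine ⟨ptn R b, ptn_lt hR2 hbal hb, Or.inl ⟨b, hb, rfl⟩, ?_⟩
    have := ptn_pos hR2 hbal hb; have := hR2 b hb
    omega

lemma hat_no_selfneg : ∀ B ∈ hatP n R, IsPairB B → negSet B ≠ B := by
  intro B hB hpair heq
  obtain ⟨u, v, huv, rfl⟩ := hpair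
  rcases hat_sign hR2 hbal hRn _ hB with h | h
  · have hu : 0 < u := h u (by simp)
    have : -u ∈ ({u, v} : Set ℤ) := by
      rw [← heq, negSet_pair]; simp
    have := h (-u) this
    omega
  · have hu : u < 0 := h u (by simp)
    have : -u ∈ ({u, v} : Set ℤ) := by
      rw [← heq, negSet_pair]; simp
    have := h (-u) this
    omega

end Hat

section PiFacts

variable {n : ℕ} {π : Set (Set ℤ)} (hπ : P12sym n π)

include hπ

lemma pi_right_bounds : ∀ r ∈ posRightLegs π, 2 ≤ r ∧ r ≤ (n : ℤ) := by
  rintro r ⟨a, har, hmem, hpos⟩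
  have hsub := (hπ.1.1 _ hmem).1
  have hr : r ∈ pmSet n := hsub (by simp)
  have ha : a ∈ pmSet n := hsub (by simp)
  obtain ⟨hr0, hrn⟩ := hr
  obtain ⟨ha0, han⟩ := ha
  rw [abs_le] at hrn han
  constructor <;> omega

open Classical in
lemma pi_ballot : ∀ b ∈ posRightLegs π, 2 * cnt (posRightLegs π) b ≤ b := by
  classical
  set R := posRightLegs π with hR
  have hex : ∀ r : ℤ, ∃ a, r ∈ R → (a < r ∧ ({a, r} : Set ℤ) ∈ π ∧ -a < r) := by
    intro r
    by_cases h : r ∈ R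
    · obtain ⟨a, ha⟩ := h
      exact ⟨a, fun _ => ha⟩
    · exact ⟨0, fun hr => absurd hr h⟩
  choose A hA using hex
  have hA1 : ∀ r ∈ R, A r < r := fun r hr => (hA r hr).1
  have hA2 : ∀ r ∈ R, ({A r, r} : Set ℤ) ∈ π := fun r hr => (hA r hr).2.1
  have hA3 : ∀ r ∈ R, -(A r) < r := fun r hr => (hA r hr).2.2
  have hAp : ∀ r ∈ R, A r ≠ 0 := by
    intro r hr
    have := (hπ.1.1 _ (hA2 r hr)).1 (by simp : A r ∈ ({A r, r} : Set ℤ))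
    exact this.1
  have habs : ∀ r ∈ R, |A r| < r := by
    intro r hr
    have := hA1 r hr; have := hA3 r hr
    rw [abs_lt]; omega
  have hrpos : ∀ r ∈ R, 2 ≤ r := fun r hr => (pi_right_bounds hπ r hr).1
  -- injectivity of r ↦ |A r|
  have hinj : ∀ r ∈ R, ∀ s ∈ R, |A r| = |A s| → r = s := by
    intro r hr s hs heq
    rcases abs_eq_abs.mp heq with h | h
    · -- A r = A s : blocks share A r
      have hbe := blockEq hπ.1 (hA2 r hr) (hA2 s hs) (x := A r)
        (by simp) (by rw [h]; simp)
      have hmem : r ∈ ({A s, s} : Set ℤ) := by rw [← hbe]; simp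
      simp only [Set.mem_insert_iff, Set.mem_singleton_iff] at hmem
      rcases hmem with h2 | h2
      · exfalso
        have h3 : |A s| = r := by rw [← h2, abs_of_pos (by have := hrpos r hr; omega)]
        have := habs r hr; have := habs s hs
        omega
      · exact h2
    · -- A r = -(A s) : block of r meets negation of block of s
      exfalso
      have hneg : negSet {A s, s} ∈ π := hπ.2.2.1 _ (hA2 s hs)
      rw [negSet_pair] at hneg
      have hbe := blockEq hπ.1 (hA2 r hr) hneg (x := A r)
        (by simp) (by rw [h]; simp)
      have hmem : r ∈ ({-(A s), -s} : Set ℤ) := by rw [← hbe]; simp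
      simp only [Set.mem_insert_iff, Set.mem_singleton_iff] at hmem
      have := hrpos r hr; have := hrpos s hs
      have := hA1 r hr
      rcases hmem with h2 | h2 <;> omega
  -- |A r| is never itself a right leg
  have hnr : ∀ r ∈ R, |A r| ∉ R := by
    intro r hr hsR
    have habr := habs r hr
    have h2r := hrpos r hr
    have h2s := hrpos _ hsR
    have hA1s := hA1 _ hsR
    have hA3s := hA3 _ hsR
    rcases abs_cases (A r) with ⟨h, _⟩ | ⟨h, _⟩
    · have hbe := blockEq hπ.1 (hA2 r hr) (hA2 _ hsR) (x := A r)
        (by simp) (by rw [h]; simp)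
      have hm2 : A |A r| ∈ ({A r, r} : Set ℤ) := by rw [hbe]; simp
      simp only [Set.mem_insert_iff, Set.mem_singleton_iff] at hm2
      rcases hm2 with h2 | h2 <;> omega
    · have hneg : negSet {A |A r|, |A r|} ∈ π := hπ.2.2.1 _ (hA2 _ hsR)
      rw [negSet_pair] at hneg
      have hbe := blockEq hπ.1 (hA2 r hr) hneg (x := A r)
        (by simp) (by simp only [Set.mem_insert_iff, Set.mem_singleton_iff]; omega)
      have hm2 : r ∈ ({-(A |A r|), -|A r|} : Set ℤ) := by rw [← hbe]; simp
      simp only [Set.mem_insert_iff, Set.mem_singleton_iff] at hm2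
      rcases hm2 with h2 | h2 <;> omega
  -- now count
  intro b hb
  have hb2 : 2 ≤ b := (pi_right_bounds hπ b hb).1
  set F := (Finset.Icc 1 b).filter (fun y => y ∈ R) with hF
  set G := F.image (fun r => |A r|) with hG
  have hFR : ∀ r ∈ F, r ∈ R := by
    intro r hrF
    exact (Finset.mem_filter.mp hrF).2
  have hFb : ∀ r ∈ F, r ≤ b := by
    intro r hrF
    exact (Finset.mem_Icc.mp (Finset.mem_filter.mp hrF).1).2
  have hGsub : G ⊆ Finset.Icc 1 b := by
    intro x hx
    obtain ⟨r, hrF, rfl⟩ := Finset.mem_image.mp hx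
    have hrR := hFR r hrF
    have := habs r hrR; have := hAp r hrR; have := hFb r hrF
    rw [Finset.mem_Icc]
    constructor
    · rcases abs_cases (A r) with ⟨h, _⟩ | ⟨h, _⟩ <;> omega
    · omega
  have hFsub : F ⊆ Finset.Icc 1 b := Finset.filter_subset _ _
  have hdisj : Disjoint F G := by
    rw [Finset.disjoint_right]
    intro x hxG hxF
    obtain ⟨r, hrF, rfl⟩ := Finset.mem_image.mp hxG
    exact hnr r (hFR r hrF) (hFR _ hxF)
  have hcard : G.card = F.card :=
    Finset.card_image_of_injOn (fun r hr s hs h => hinj r (hFR r hr) s (hFR s hs) h)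
  have hunion : (F ∪ G).card = F.card + G.card := Finset.card_union_of_disjoint hdisj
  have hle : (F ∪ G).card ≤ (Finset.Icc (1:ℤ) b).card :=
    Finset.card_le_card (Finset.union_subset hFsub hGsub)
  have hIcc : (Finset.Icc (1:ℤ) b).card = b.toNat := by
    rw [Int.card_Icc]
    omega
  have : 2 * F.card ≤ b.toNat := by omega
  have hcnt : cnt R b = (F.card : ℤ) := by
    rw [cnt]
  omega

end PiFacts

section Unique

variable {n : ℕ} {π : Set (Set ℤ)}

lemma rightleg_pos {ρ : Set (Set ℤ)} (hρ : HatProps n π ρ) {r : ℤ}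
    (hr : r ∈ posRightLegs π) : 0 < r := by
  rw [← hρ.2.2.2.2.2.1] at hr
  obtain ⟨a, har, hm, hpos⟩ := hr
  rcases hρ.2.2.2.2.1 _ hm with h | h
  · exact h r (by simp)
  · have h1 := h a (by simp)
    have h2 := h r (by simp)
    omega

lemma partner_props {ρ : Set (Set ℤ)} (hρ : HatProps n π ρ) {a r : ℤ}
    (har : a < r) (hm : ({a, r} : Set ℤ) ∈ ρ) (hr : r ∈ posRightLegs π) :
    0 < a ∧ a ∉ posRightLegs π := by
  have hrpos := rightleg_pos hρ hr
  have hapos : 0 < a := by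
    rcases hρ.2.2.2.2.1 _ hm with h | h
    · exact h a (by simp)
    · exact absurd (h r (by simp)) (by omega)
  refine ⟨hapos, ?_⟩
  intro haR
  rw [← hρ.2.2.2.2.2.1] at haR
  obtain ⟨c, hca, hcm, _⟩ := haR
  have hbe := blockEq hρ.1 hcm hm (x := a) (by simp) (by simp)
  have : c ∈ ({a, r} : Set ℤ) := by rw [← hbe]; simp
  simp only [Set.mem_insert_iff, Set.mem_singleton_iff] at this
  omega

lemma pos_pair_block {ρ : Set (Set ℤ)} (hρ : HatProps n π ρ) {B : Set ℤ}
    (hB : B ∈ ρ) (hpair : IsPairB B) {z : ℤ} (hz : z ∈ B) (hzpos : 0 < z) :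
    ∃ x y : ℤ, x < y ∧ 0 < x ∧ B = {x, y} ∧ y ∈ posRightLegs π := by
  obtain ⟨u, v, huv, rfl⟩ := hpair
  have hallpos : ∀ w ∈ ({u, v} : Set ℤ), 0 < w := by
    rcases hρ.2.2.2.2.1 _ hB with h | h
    · exact h
    · exact absurd (h z hz) (by omega)
  have hu := hallpos u (by simp)
  have hv := hallpos v (by simp)
  rcases lt_or_gt_of_ne huv with h | h
  · refine ⟨u, v, h, hu, rfl, ?_⟩
    rw [← hρ.2.2.2.2.2.1]
    exact ⟨u, h, hB, by omega⟩
  · refine ⟨v, u, h, hv, by rw [Set.pair_comm], ?_⟩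
    rw [← hρ.2.2.2.2.2.1]
    exact ⟨v, h, by rwa [Set.pair_comm] at hB, by omega⟩

lemma engine {ρ1 ρ2 : Set (Set ℤ)} (h1 : HatProps n π ρ1) (h2 : HatProps n π ρ2)
    {r a1 a2 : ℤ} (hr : r ∈ posRightLegs π)
    (ha1 : a1 < r) (ha1m : ({a1, r} : Set ℤ) ∈ ρ1)
    (ha2 : a2 < r) (ha2m : ({a2, r} : Set ℤ) ∈ ρ2)
    (IH : ∀ s ∈ posRightLegs π, s < r → ∀ b1 b2 : ℤ, b1 < s →
      ({b1, s} : Set ℤ) ∈ ρ1 → b2 < s → ({b2, s} : Set ℤ) ∈ ρ2 → b1 = b2)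
    (hlt : a1 < a2) : False := by
  have hrpos := rightleg_pos h1 hr
  obtain ⟨ha2pos, ha2nR⟩ := partner_props h2 ha2 ha2m hr
  obtain ⟨ha1pos, _⟩ := partner_props h1 ha1 ha1m hr
  -- the block of a2 in ρ1
  have ha2pm : a2 ∈ pmSet n := (h2.1.1 _ ha2m).1 (by simp)
  obtain ⟨B, ⟨hB, ha2B⟩, _⟩ := h1.1.2 a2 ha2pm
  rcases h1.2.1 B hB with hpair | hsingle
  · obtain ⟨x, y, hxy, hxpos, rfl, hyR⟩ := pos_pair_block h1 hB hpair ha2B ha2pos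
    simp only [Set.mem_insert_iff, Set.mem_singleton_iff] at ha2B
    rcases ha2B with rfl | rfl
    · -- a2 is the left leg of {a2, y} in ρ1
      rcases lt_trichotomy y r with hyr | hyr | hyr
      · -- y < r : use IH
        obtain ⟨c, hcy, hcm, _⟩ : y ∈ posRightLegs ρ2 := by
          rw [h2.2.2.2.2.2.1]; exact hyR
        have : a2 = c := IH y hyR hyr a2 c hxy hB hcy hcm
        subst this
        have hbe := blockEq h2.1 hcm ha2m (x := a2) (by simp) (by simp)
        have : r ∈ ({a2, y} : Set ℤ) := by rw [hbe]; simp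
        simp only [Set.mem_insert_iff, Set.mem_singleton_iff] at this
        omega
      · -- y = r : two partners of r in ρ1
        subst hyr
        have := pair_right_unique h1.1 ha1m hB (by omega) (by omega)
        omega
      · -- y > r : crossing in ρ1
        refine h1.2.2.1 ⟨a1, a2, r, y, {a1, r}, {a2, y}, ha1m, hB, ?_, hlt, ha2, hyr,
          by simp, by simp, by simp, by simp⟩
        intro hcon
        have : a2 ∈ ({a1, r} : Set ℤ) := by rw [hcon]; simp
        simp only [Set.mem_insert_iff, Set.mem_singleton_iff] at this
        omega
    · -- a2 is a right leg: contradiction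
      exact ha2nR hyR
  · obtain ⟨c, rfl⟩ := hsingle
    simp only [Set.mem_singleton_iff] at ha2B
    subst ha2B
    exact h1.2.2.2.2.2.2.2 ⟨a1, r, a2, hlt, ha2, ha1m, hB⟩

lemma agree {ρ1 ρ2 : Set (Set ℤ)} (h1 : HatProps n π ρ1) (h2 : HatProps n π ρ2) :
    ∀ r ∈ posRightLegs π, ∀ b1 b2 : ℤ, b1 < r → ({b1, r} : Set ℤ) ∈ ρ1 →
      b2 < r → ({b2, r} : Set ℤ) ∈ ρ2 → b1 = b2 := by
  have H : ∀ m : ℕ, ∀ r ∈ posRightLegs π, r ≤ (m : ℤ) → ∀ b1 b2 : ℤ, b1 < r →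
      ({b1, r} : Set ℤ) ∈ ρ1 → b2 < r → ({b2, r} : Set ℤ) ∈ ρ2 → b1 = b2 := by
    intro m
    induction m using Nat.strong_induction_on with
    | _ m ih =>
      intro r hr hrm b1 b2 hb1 hb1m hb2 hb2m
      have hrpos := rightleg_pos h1 hr
      have hm1 : 1 ≤ m := by omega
      have IH : ∀ s ∈ posRightLegs π, s < r → ∀ c1 c2 : ℤ, c1 < s →
          ({c1, s} : Set ℤ) ∈ ρ1 → c2 < s → ({c2, s} : Set ℤ) ∈ ρ2 → c1 = c2 := by
        intro s hs hsr c1 c2 hc1 hc1m hc2 hc2m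
        exact ih (m-1) (by omega) s hs (by omega) c1 c2 hc1 hc1m hc2 hc2m
      rcases lt_trichotomy b1 b2 with h | h | h
      · exact absurd (engine h1 h2 hr hb1 hb1m hb2 hb2m IH h) not_false
      · exact h
      · have IH' : ∀ s ∈ posRightLegs π, s < r → ∀ c1 c2 : ℤ, c1 < s →
            ({c1, s} : Set ℤ) ∈ ρ2 → c2 < s → ({c2, s} : Set ℤ) ∈ ρ1 → c1 = c2 := by
          intro s hs hsr c1 c2 hc1 hc1m hc2 hc2m
          exact (IH s hs hsr c2 c1 hc2 hc2m hc1 hc1m).symm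
        exact absurd (engine h2 h1 hr hb2 hb2m hb1 hb1m IH' h) not_false
  intro r hr b1 b2 hb1 hb1m hb2 hb2m
  have hrpos := rightleg_pos h1 hr
  exact H r.toNat r hr (by omega) b1 b2 hb1 hb1m hb2 hb2m

lemma hat_subset_of_agree {ρ1 ρ2 : Set (Set ℤ)} (h1 : HatProps n π ρ1)
    (h2 : HatProps n π ρ2) : ρ1 ⊆ ρ2 := by
  have hagree := agree h1 h2
  have hpos : ∀ B ∈ ρ1, (∀ x ∈ B, 0 < x) → B ∈ ρ2 := by
    intro B hB hBpos
    rcases h1.2.1 B hB with hpair | hsingle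
    · obtain ⟨u, v, huv, rfl⟩ := hpair
      have hu := hBpos u (by simp)
      obtain ⟨x, y, hxy, hxpos, he, hyR⟩ := pos_pair_block h1 hB ⟨u, v, huv, rfl⟩ (z := u) (by simp) hu
      rw [he] at hB ⊢
      obtain ⟨c, hcy, hcm, _⟩ : y ∈ posRightLegs ρ2 := by
        rw [h2.2.2.2.2.2.1]; exact hyR
      have : x = c := hagree y hyR x c hxy hB hcy hcm
      subst this
      exact hcm
    · obtain ⟨c, rfl⟩ := hsingle
      have hcpos := hBpos c (by simp)
      have hcpm : c ∈ pmSet n := (h1.1.1 _ hB).1 (by simp)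
      obtain ⟨C, ⟨hC, hcC⟩, _⟩ := h2.1.2 c hcpm
      rcases h2.2.1 C hC with hpair' | hsingle'
      · exfalso
        obtain ⟨x, y, hxy, hxpos, rfl, hyR⟩ := pos_pair_block h2 hC hpair' hcC hcpos
        obtain ⟨d, hdy, hdm, _⟩ : y ∈ posRightLegs ρ1 := by
          rw [h1.2.2.2.2.2.1]; exact hyR
        have : d = x := hagree y hyR d x hdy hdm hxy hC
        subst this
        have hbe := blockEq h1.1 hB hdm (x := c) (by simp) hcC
        have h1' : d ∈ ({c} : Set ℤ) := by rw [hbe]; simp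
        have h2' : y ∈ ({c} : Set ℤ) := by rw [hbe]; simp
        simp only [Set.mem_singleton_iff] at h1' h2'
        omega
      · obtain ⟨d, rfl⟩ := hsingle'
        simp only [Set.mem_singleton_iff] at hcC
        rw [hcC]
        exact hC
  intro B hB
  rcases h1.2.2.2.2.1 B hB with h | h
  · exact hpos B hB h
  · have hnB : negSet B ∈ ρ1 := h1.2.2.2.1 B hB
    have : negSet B ∈ ρ2 := by
      apply hpos _ hnB
      rintro x ⟨y, hy, rfl⟩
      have := h y hy
      show (0:ℤ) < -y
      omega
    have := h2.2.2.2.1 _ this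
    rwa [negSet_negSet] at this

end Unique

/-- existence and uniqueness of π̂. -/
theorem hat_partition_exists_unique (n : ℕ) (π : Set (Set ℤ)) (hπ : P12sym n π) :
    ∃! ρ : Set (Set ℤ), HatProps n π ρ := by
  set R := posRightLegs π with hRdef
  have hR2 : ∀ r ∈ R, 2 ≤ r := fun r hr => (pi_right_bounds hπ r hr).1
  have hRn : ∀ r ∈ R, r ≤ (n : ℤ) := fun r hr => (pi_right_bounds hπ r hr).2
  have hbal : ∀ r ∈ R, 2 * cnt R r ≤ r := pi_ballot hπ
  have hhat : HatProps n π (hatP n R) := by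
    refine ⟨hat_isPartition hR2 hbal hRn, hat_pair_single hR2 hbal hRn,
      hat_noncrossing hR2 hbal hRn, hat_negSet hR2 hbal hRn, hat_sign hR2 hbal hRn,
      ?_, ?_, hat_nocover hR2 hbal hRn⟩
    · exact hat_posRight hR2 hbal hRn
    · have e1 := negLeft_eq (hat_negSet hR2 hbal hRn) (hat_no_selfneg hR2 hbal hRn)
      have e2 := negLeft_eq hπ.2.2.1 hπ.2.2.2
      rw [e1, e2, hat_posRight hR2 hbal hRn]
  exact ⟨hatP n R, hhat, fun ρ' hρ' =>
    Set.Subset.antisymm (hat_subset_of_agree hρ' hhat) (hat_subset_of_agree hhat hρ')⟩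

end TypeB
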